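/- Let α₁, α₂ be locally measurable functions on [0,∞) with α_j(t) ≤ t for t ≥ 0 and lim_{t→∞} α_j(t) = ∞ for j = 1,2. Then the equation φ''(t) + sin²(t)·φ(α₁(t)) + cos²(t)·φ(α₂(t)) − φ(t) = cos(sin(ln(1+t))), t ≥ 0, is nonoscillatory. -/

import Mathlib

open MeasureTheory Real Set

/-- `φ` is a solution, defined from `t₁ ≥ t₀` onwards, of the second order
functional-differential equation `(p φ')' + q φ' + ∑ j, r j t · φ (α j t) = f t`:
a continuous function on `ℝ`, continuously differentiable on `[t₁, ∞)` with derivative `φd`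
there, such that `p·φd` is absolutely continuous on `[t₁, ∞)` and the equation holds almost
everywhere on `[t₁, ∞)` (encoded in integral form). -/
def IsSolutionFrom (t₀ : ℝ) (p q f : ℝ → ℝ) (n : ℕ) (r α : Fin n → ℝ → ℝ)
    (t₁ : ℝ) (φ : ℝ → ℝ) : Prop :=
  t₀ ≤ t₁ ∧ Continuous φ ∧ ∃ φd : ℝ → ℝ,
    ContinuousOn φd (Ici t₁) ∧
    (∀ t ∈ Ici t₁, HasDerivWithinAt φ (φd t) (Ici t₁) t) ∧
    ∀ t ∈ Ici t₁,
      IntervalIntegrable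
        (fun s => f s - q s * φd s - ∑ j : Fin n, r j s * φ (α j s)) volume t₁ t ∧
      p t * φd t = p t₁ * φd t₁ +
        ∫ s in t₁..t, (f s - q s * φd s - ∑ j : Fin n, r j s * φ (α j s))

/-- `φ` is a solution of `(p φ')' + q φ' + ∑ j, r j t · φ (α j t) = f t`, i.e. a solution
defined from some `t₁ ≥ t₀`. -/
def IsSolution (t₀ : ℝ) (p q f : ℝ → ℝ) (n : ℕ) (r α : Fin n → ℝ → ℝ) (φ : ℝ → ℝ) : Prop :=
  ∃ t₁ : ℝ, IsSolutionFrom t₀ p q f n r α t₁ φ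

/-- The equation `(p φ')' + q φ' + ∑ j, r j t · φ (α j t) = f t` is oscillatory:
every solution has arbitrarily large zeroes. -/
def EquationOscillatory (t₀ : ℝ) (p q f : ℝ → ℝ) (n : ℕ) (r α : Fin n → ℝ → ℝ) : Prop :=
  ∀ φ : ℝ → ℝ, IsSolution t₀ p q f n r α φ → ∀ T : ℝ, ∃ t, T ≤ t ∧ φ t = 0

/-- The equation is oscillatory on the interval `[a, b]`: every solution vanishes
somewhere on `[a, b]`. -/
def EquationOscillatoryOn (t₀ : ℝ) (p q f : ℝ → ℝ) (n : ℕ) (r α : Fin n → ℝ → ℝ)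
    (a b : ℝ) : Prop :=
  ∀ φ : ℝ → ℝ, IsSolution t₀ p q f n r α φ → ∃ t ∈ Icc a b, φ t = 0

noncomputable section StmtAux

namespace StmtAux

open BoundedContinuousFunction
open scoped Interval

/-- weight -/
def wt2 (t : ℝ) : ℝ := Real.exp (2 * max t 0)

lemma wt2_cont : Continuous wt2 :=
  Real.continuous_exp.comp (continuous_const.mul (continuous_id.max continuous_const))

lemma wt2_pos (t : ℝ) : 0 < wt2 t := Real.exp_pos _

lemma wt2_mono : Monotone wt2 := fun a b hab =>
  Real.exp_le_exp.2 (by gcongr)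

lemma wt2_of_nonneg {t : ℝ} (ht : 0 ≤ t) : wt2 t = Real.exp (2 * t) := by
  simp [wt2, max_eq_left ht]

lemma wt2_of_nonpos {t : ℝ} (ht : t ≤ 0) : wt2 t = 1 := by
  simp [wt2, max_eq_right ht]

/-- unweighted function -/
def uu (v : ℝ →ᵇ ℝ) : ℝ → ℝ := fun t => wt2 t * v t

lemma uu_cont (v : ℝ →ᵇ ℝ) : Continuous (uu v) := wt2_cont.mul v.continuous

lemma uu_abs_le (v : ℝ →ᵇ ℝ) (t : ℝ) : |uu v t| ≤ ‖v‖ * wt2 t := by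
  have h : |v t| ≤ ‖v‖ := by rw [← Real.norm_eq_abs]; exact v.norm_coe_le_norm t
  calc |uu v t| = wt2 t * |v t| := by rw [uu, abs_mul, abs_of_pos (wt2_pos t)]
  _ ≤ wt2 t * ‖v‖ := mul_le_mul_of_nonneg_left h (wt2_pos t).le
  _ = ‖v‖ * wt2 t := mul_comm _ _

lemma uu_intable (v : ℝ →ᵇ ℝ) (a b : ℝ) : IntervalIntegrable (uu v) volume a b :=
  (uu_cont v).intervalIntegrable a b

lemma uu_sub (v w : ℝ →ᵇ ℝ) (t : ℝ) : uu (v - w) t = uu v t - uu w t := by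
  simp [uu]; ring

/-- primitive -/
def UU (v : ℝ →ᵇ ℝ) (x : ℝ) : ℝ := ∫ σ in (0:ℝ)..x, uu v σ

lemma UU_cont (v : ℝ →ᵇ ℝ) : Continuous (UU v) :=
  intervalIntegral.continuous_primitive (uu_intable v) 0

lemma UU_zero (v : ℝ →ᵇ ℝ) : UU v 0 = 0 := intervalIntegral.integral_same

lemma UU_diff_eq (v : ℝ →ᵇ ℝ) (a s : ℝ) : UU v s - UU v a = ∫ σ in a..s, uu v σ := by
  have := intervalIntegral.integral_add_adjacent_intervals (uu_intable v 0 a) (uu_intable v a s)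
  rw [UU, UU, ← this]; ring

lemma UU_sub (v w : ℝ →ᵇ ℝ) (x : ℝ) : UU (v - w) x = UU v x - UU w x := by
  rw [UU, UU, UU, ← intervalIntegral.integral_sub (uu_intable v 0 x) (uu_intable w 0 x)]
  simp [uu_sub]

lemma exp2_int (a b : ℝ) :
    ∫ s in a..b, Real.exp (2 * s) = (Real.exp (2 * b) - Real.exp (2 * a)) / 2 := by
  have h := intervalIntegral.integral_comp_mul_left (a := a) (b := b)
    (fun x => Real.exp x) (two_ne_zero (α := ℝ))
  rw [h, integral_exp, smul_eq_mul]; ring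

lemma UU_nonneg {v : ℝ →ᵇ ℝ} (hv : ∀ t, 0 ≤ v t) {a s : ℝ} (has : a ≤ s) :
    0 ≤ UU v s - UU v a := by
  rw [UU_diff_eq]
  exact intervalIntegral.integral_nonneg has fun σ _ => mul_nonneg (wt2_pos σ).le (hv σ)

lemma UU_diff_bound (v : ℝ →ᵇ ℝ) {a s : ℝ} (h0 : 0 ≤ a) (has : a ≤ s) :
    |UU v s - UU v a| ≤ ‖v‖ * Real.exp (2 * s) / 2 := by
  have hb : IntervalIntegrable (fun σ => ‖v‖ * Real.exp (2 * σ)) volume a s :=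
    (continuous_const.mul (Real.continuous_exp.comp (continuous_const.mul
      continuous_id))).intervalIntegrable a s
  have hae : ∀ᵐ σ ∂(volume.restrict (Ι a s)), ‖uu v σ‖ ≤ ‖v‖ * Real.exp (2 * σ) := by
    filter_upwards [ae_restrict_mem measurableSet_uIoc] with σ hσ
    rw [Set.uIoc_of_le has] at hσ
    calc ‖uu v σ‖ = |uu v σ| := Real.norm_eq_abs _
    _ ≤ ‖v‖ * wt2 σ := uu_abs_le v σ
    _ = ‖v‖ * Real.exp (2 * σ) := by rw [wt2_of_nonneg (h0.trans hσ.1.le)]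
  have h := intervalIntegral.norm_integral_le_abs_of_norm_le hae hb
  rw [UU_diff_eq, ← Real.norm_eq_abs]
  refine h.trans ?_
  rw [intervalIntegral.integral_const_mul, exp2_int]
  have h1 : 0 < Real.exp (2 * a) := Real.exp_pos _
  have h2 : Real.exp (2 * a) ≤ Real.exp (2 * s) := Real.exp_le_exp.2 (by linarith)
  have h3 : (0:ℝ) ≤ ‖v‖ := norm_nonneg v
  rw [abs_of_nonneg (mul_nonneg h3 (by linarith))]
  nlinarith

lemma UU_abs_le (v : ℝ →ᵇ ℝ) (x : ℝ) : |UU v x| ≤ ‖v‖ * wt2 x * |x| := by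
  have hmax : wt2 (max x 0) = wt2 x := by
    rcases le_total 0 x with h | h
    · rw [max_eq_left h]
    · rw [wt2_of_nonpos h, max_eq_right h, wt2_of_nonpos le_rfl]
  have hb : ∀ σ ∈ Ι (0:ℝ) x, ‖uu v σ‖ ≤ ‖v‖ * wt2 x := by
    intro σ hσ
    have hσle : σ ≤ max x 0 := by
      rcases le_total 0 x with h | h
      · rw [Set.uIoc_of_le h] at hσ; exact le_max_of_le_left hσ.2
      · rw [Set.uIoc_of_ge h] at hσ; exact le_max_of_le_right hσ.2
    calc ‖uu v σ‖ = |uu v σ| := Real.norm_eq_abs _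
    _ ≤ ‖v‖ * wt2 σ := uu_abs_le v σ
    _ ≤ ‖v‖ * wt2 x := by
        rw [← hmax]; exact mul_le_mul_of_nonneg_left (wt2_mono hσle) (norm_nonneg v)
  have h := intervalIntegral.norm_integral_le_of_norm_le_const hb
  rw [← Real.norm_eq_abs, UU]
  simpa using h


/-- truncated deviating argument -/
def aj (α : ℝ → ℝ) (s : ℝ) : ℝ := max (min (α s) s) 0

lemma aj_nonneg (α : ℝ → ℝ) (s : ℝ) : 0 ≤ aj α s := le_max_right _ _

lemma aj_le_max (α : ℝ → ℝ) (s : ℝ) : aj α s ≤ max s 0 :=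
  max_le (le_max_of_le_left (min_le_right _ _)) (le_max_right _ _)

lemma aj_le (α : ℝ → ℝ) {s : ℝ} (hs : 0 ≤ s) : aj α s ≤ s := by
  have := aj_le_max α s
  rwa [max_eq_left hs] at this

lemma aj_meas {α : ℝ → ℝ} (hm : Measurable α) : Measurable (aj α) :=
  (hm.min measurable_id).max measurable_const

lemma aj_eq {α : ℝ → ℝ} (hle : ∀ t, 0 ≤ t → α t ≤ t) {s : ℝ} (hs : 0 ≤ s) :
    aj α s = max (α s) 0 := by
  rw [aj, min_eq_left (hle s hs)]

lemma wt2_max (x : ℝ) : wt2 (max x 0) = wt2 x := by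
  rcases le_total 0 x with h | h
  · rw [max_eq_left h]
  · rw [wt2_of_nonpos h, max_eq_right h, wt2_of_nonpos le_rfl]

/-- the forcing term -/
def ff (s : ℝ) : ℝ := Real.cos (Real.sin (Real.log (1 + s)))

lemma ff_meas : Measurable ff :=
  Real.measurable_cos.comp (Real.measurable_sin.comp
    (Real.measurable_log.comp (measurable_const.add measurable_id)))

lemma one_le_pi_div_two : (1:ℝ) ≤ Real.pi / 2 := by
  have := Real.pi_gt_three; linarith

lemma ff_nonneg (s : ℝ) : 0 ≤ ff s := by
  apply Real.cos_nonneg_of_mem_Icc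
  constructor
  · have := Real.neg_one_le_sin (Real.log (1 + s))
    have h2 := one_le_pi_div_two
    linarith
  · have := Real.sin_le_one (Real.log (1 + s))
    have h2 := one_le_pi_div_two
    linarith

lemma ff_abs_le (s : ℝ) : |ff s| ≤ 1 := Real.abs_cos_le_one _

/-- the integrand of the operator -/
def gg (α₁ α₂ : ℝ → ℝ) (v : ℝ →ᵇ ℝ) (s : ℝ) : ℝ :=
  ff s + Real.sin s ^ 2 * (UU v s - UU v (aj α₁ s))
    + Real.cos s ^ 2 * (UU v s - UU v (aj α₂ s))

lemma gg_meas {α₁ α₂ : ℝ → ℝ} (hm₁ : Measurable α₁) (hm₂ : Measurable α₂) (v : ℝ →ᵇ ℝ) :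
    Measurable (gg α₁ α₂ v) := by
  apply Measurable.add
  apply Measurable.add
  · exact ff_meas
  · exact (Real.measurable_sin.pow_const 2).mul
      (((UU_cont v).measurable.comp measurable_id).sub
        ((UU_cont v).measurable.comp (aj_meas hm₁)))
  · exact (Real.measurable_cos.pow_const 2).mul
      (((UU_cont v).measurable.comp measurable_id).sub
        ((UU_cont v).measurable.comp (aj_meas hm₂)))

lemma UU_aj_abs_le (v : ℝ →ᵇ ℝ) (β : ℝ → ℝ) (s : ℝ) :
    |UU v (aj β s)| ≤ ‖v‖ * wt2 s * |s| := by
  refine (UU_abs_le v (aj β s)).trans ?_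
  have h1 : wt2 (aj β s) ≤ wt2 s := by
    rw [← wt2_max s]; exact wt2_mono (aj_le_max β s)
  have h2 : |aj β s| ≤ |s| := by
    rw [abs_of_nonneg (aj_nonneg β s)]
    exact (aj_le_max β s).trans (max_le (le_abs_self s) (abs_nonneg s))
  have hv := norm_nonneg v
  have key : wt2 (aj β s) * |aj β s| ≤ wt2 s * |s| :=
    mul_le_mul h1 h2 (abs_nonneg _) (wt2_pos s).le
  calc ‖v‖ * wt2 (aj β s) * |aj β s| = ‖v‖ * (wt2 (aj β s) * |aj β s|) := mul_assoc _ _ _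
  _ ≤ ‖v‖ * (wt2 s * |s|) := mul_le_mul_of_nonneg_left key hv
  _ = ‖v‖ * wt2 s * |s| := (mul_assoc _ _ _).symm

lemma gg_abs_le {α₁ α₂ : ℝ → ℝ} (v : ℝ →ᵇ ℝ) (s : ℝ) :
    |gg α₁ α₂ v s| ≤ 1 + 4 * (‖v‖ * wt2 s * |s|) := by
  set M := ‖v‖ * wt2 s * |s| with hM
  have hM0 : 0 ≤ M := by
    have := norm_nonneg v
    have := (wt2_pos s).le
    have := abs_nonneg s
    positivity
  have hUs := abs_le.1 (UU_abs_le v s)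
  have hU1 := abs_le.1 (UU_aj_abs_le v α₁ s)
  have hU2 := abs_le.1 (UU_aj_abs_le v α₂ s)
  have e1 : |Real.sin s ^ 2 * (UU v s - UU v (aj α₁ s))| ≤ 2 * M := by
    rw [abs_mul, abs_of_nonneg (sq_nonneg _)]
    have hd : |UU v s - UU v (aj α₁ s)| ≤ 2 * M :=
      abs_le.2 ⟨by linarith [hUs.1, hU1.2], by linarith [hUs.2, hU1.1]⟩
    calc Real.sin s ^ 2 * |UU v s - UU v (aj α₁ s)| ≤ 1 * (2 * M) :=
      mul_le_mul (Real.sin_sq_le_one s) hd (abs_nonneg _) one_pos.le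
    _ = 2 * M := one_mul _
  have e2 : |Real.cos s ^ 2 * (UU v s - UU v (aj α₂ s))| ≤ 2 * M := by
    rw [abs_mul, abs_of_nonneg (sq_nonneg _)]
    have hd : |UU v s - UU v (aj α₂ s)| ≤ 2 * M :=
      abs_le.2 ⟨by linarith [hUs.1, hU2.2], by linarith [hUs.2, hU2.1]⟩
    calc Real.cos s ^ 2 * |UU v s - UU v (aj α₂ s)| ≤ 1 * (2 * M) :=
      mul_le_mul (Real.cos_sq_le_one s) hd (abs_nonneg _) one_pos.le
    _ = 2 * M := one_mul _
  have e0 := ff_abs_le s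
  calc |gg α₁ α₂ v s|
      ≤ |ff s + Real.sin s ^ 2 * (UU v s - UU v (aj α₁ s))|
        + |Real.cos s ^ 2 * (UU v s - UU v (aj α₂ s))| := abs_add_le _ _
  _ ≤ |ff s| + |Real.sin s ^ 2 * (UU v s - UU v (aj α₁ s))|
        + |Real.cos s ^ 2 * (UU v s - UU v (aj α₂ s))| := by
        have := abs_add_le (ff s) (Real.sin s ^ 2 * (UU v s - UU v (aj α₁ s)))
        linarith
  _ ≤ 1 + 4 * M := by linarith

lemma gg_intable {α₁ α₂ : ℝ → ℝ} (hm₁ : Measurable α₁) (hm₂ : Measurable α₂) (v : ℝ →ᵇ ℝ)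
    (a b : ℝ) : IntervalIntegrable (gg α₁ α₂ v) volume a b := by
  have hBc : Continuous (fun s : ℝ => 1 + 4 * (‖v‖ * wt2 s * |s|)) :=
    continuous_const.add (continuous_const.mul
      ((continuous_const.mul wt2_cont).mul continuous_abs))
  refine (hBc.intervalIntegrable a b).mono_fun' ((gg_meas hm₁ hm₂ v).aestronglyMeasurable) ?_
  exact Filter.Eventually.of_forall fun s => by
    simpa [Real.norm_eq_abs] using gg_abs_le (α₁ := α₁) (α₂ := α₂) v s

def GG (α₁ α₂ : ℝ → ℝ) (v : ℝ →ᵇ ℝ) (t : ℝ) : ℝ := ∫ s in (0:ℝ)..t, gg α₁ α₂ v s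

lemma GG_cont {α₁ α₂ : ℝ → ℝ} (hm₁ : Measurable α₁) (hm₂ : Measurable α₂) (v : ℝ →ᵇ ℝ) :
    Continuous (GG α₁ α₂ v) :=
  intervalIntegral.continuous_primitive (gg_intable hm₁ hm₂ v) 0

lemma GG_nonneg {α₁ α₂ : ℝ → ℝ} {v : ℝ →ᵇ ℝ} (hv : ∀ t, 0 ≤ v t) {t : ℝ} (ht : 0 ≤ t) :
    0 ≤ GG α₁ α₂ v t := by
  apply intervalIntegral.integral_nonneg ht
  intro s hs
  have hs0 : 0 ≤ s := hs.1
  have h1 := ff_nonneg s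
  have h2 : 0 ≤ UU v s - UU v (aj α₁ s) := UU_nonneg hv (aj_le α₁ hs0)
  have h3 : 0 ≤ UU v s - UU v (aj α₂ s) := UU_nonneg hv (aj_le α₂ hs0)
  exact add_nonneg (add_nonneg h1 (mul_nonneg (sq_nonneg _) h2)) (mul_nonneg (sq_nonneg _) h3)

lemma gg_sharp {α₁ α₂ : ℝ → ℝ} (v : ℝ →ᵇ ℝ) {s : ℝ} (hs : 0 ≤ s) :
    |gg α₁ α₂ v s| ≤ 1 + ‖v‖ / 2 * Real.exp (2 * s) := by
  have h1 := UU_diff_bound v (aj_nonneg α₁ s) (aj_le α₁ hs)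
  have h2 := UU_diff_bound v (aj_nonneg α₂ s) (aj_le α₂ hs)
  set D := ‖v‖ * Real.exp (2 * s) / 2 with hD
  have e1 : |Real.sin s ^ 2 * (UU v s - UU v (aj α₁ s))| ≤ Real.sin s ^ 2 * D := by
    rw [abs_mul, abs_of_nonneg (sq_nonneg _)]
    exact mul_le_mul_of_nonneg_left h1 (sq_nonneg _)
  have e2 : |Real.cos s ^ 2 * (UU v s - UU v (aj α₂ s))| ≤ Real.cos s ^ 2 * D := by
    rw [abs_mul, abs_of_nonneg (sq_nonneg _)]
    exact mul_le_mul_of_nonneg_left h2 (sq_nonneg _)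
  have e0 := ff_abs_le s
  have hpy : Real.sin s ^ 2 * D + Real.cos s ^ 2 * D = D := by
    rw [← add_mul, Real.sin_sq_add_cos_sq, one_mul]
  have tri : |gg α₁ α₂ v s|
      ≤ |ff s| + |Real.sin s ^ 2 * (UU v s - UU v (aj α₁ s))|
        + |Real.cos s ^ 2 * (UU v s - UU v (aj α₂ s))| := by
    calc |gg α₁ α₂ v s|
        ≤ |ff s + Real.sin s ^ 2 * (UU v s - UU v (aj α₁ s))|
          + |Real.cos s ^ 2 * (UU v s - UU v (aj α₂ s))| := abs_add_le _ _
    _ ≤ _ := by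
        have := abs_add_le (ff s) (Real.sin s ^ 2 * (UU v s - UU v (aj α₁ s)))
        linarith
  have : |gg α₁ α₂ v s| ≤ 1 + D := by linarith
  linarith [this, hD ▸ le_refl D]

lemma gg_sub_eq (α₁ α₂ : ℝ → ℝ) (v w : ℝ →ᵇ ℝ) (s : ℝ) :
    gg α₁ α₂ v s - gg α₁ α₂ w s =
      Real.sin s ^ 2 * (UU (v - w) s - UU (v - w) (aj α₁ s))
        + Real.cos s ^ 2 * (UU (v - w) s - UU (v - w) (aj α₂ s)) := by
  simp only [gg, UU_sub]; ring

lemma gg_sub_bound {α₁ α₂ : ℝ → ℝ} (v w : ℝ →ᵇ ℝ) {s : ℝ} (hs : 0 ≤ s) :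
    |gg α₁ α₂ v s - gg α₁ α₂ w s| ≤ ‖v - w‖ / 2 * Real.exp (2 * s) := by
  rw [gg_sub_eq]
  have h1 := UU_diff_bound (v - w) (aj_nonneg α₁ s) (aj_le α₁ hs)
  have h2 := UU_diff_bound (v - w) (aj_nonneg α₂ s) (aj_le α₂ hs)
  set D := ‖v - w‖ * Real.exp (2 * s) / 2 with hD
  have e1 : |Real.sin s ^ 2 * (UU (v - w) s - UU (v - w) (aj α₁ s))| ≤ Real.sin s ^ 2 * D := by
    rw [abs_mul, abs_of_nonneg (sq_nonneg _)]
    exact mul_le_mul_of_nonneg_left h1 (sq_nonneg _)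
  have e2 : |Real.cos s ^ 2 * (UU (v - w) s - UU (v - w) (aj α₂ s))| ≤ Real.cos s ^ 2 * D := by
    rw [abs_mul, abs_of_nonneg (sq_nonneg _)]
    exact mul_le_mul_of_nonneg_left h2 (sq_nonneg _)
  have hpy : Real.sin s ^ 2 * D + Real.cos s ^ 2 * D = D := by
    rw [← add_mul, Real.sin_sq_add_cos_sq, one_mul]
  have tri := abs_add_le (Real.sin s ^ 2 * (UU (v - w) s - UU (v - w) (aj α₁ s)))
    (Real.cos s ^ 2 * (UU (v - w) s - UU (v - w) (aj α₂ s)))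
  have hgoal : ‖v - w‖ / 2 * Real.exp (2 * s) = D := by rw [hD]; ring
  rw [hgoal]
  linarith

lemma cont_exp2 (d : ℝ) : Continuous fun s : ℝ => d * Real.exp (2 * s) :=
  continuous_const.mul (Real.continuous_exp.comp (continuous_const.mul continuous_id))

lemma integral_exp_aux (d t : ℝ) :
    ∫ s in (0:ℝ)..t, (1 + d * Real.exp (2 * s)) = t + d * (Real.exp (2 * t) - 1) / 2 := by
  rw [intervalIntegral.integral_add (intervalIntegrable_const) ((cont_exp2 d).intervalIntegrable 0 t),
    intervalIntegral.integral_const, intervalIntegral.integral_const_mul, exp2_int]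
  have h0 : (2:ℝ) * 0 = 0 := by ring
  rw [h0, Real.exp_zero]
  simp only [smul_eq_mul, mul_one, sub_zero]
  ring

lemma integral_exp_aux2 (d t : ℝ) :
    ∫ s in (0:ℝ)..t, d * Real.exp (2 * s) = d * (Real.exp (2 * t) - 1) / 2 := by
  rw [intervalIntegral.integral_const_mul, exp2_int]
  have h0 : (2:ℝ) * 0 = 0 := by ring
  rw [h0, Real.exp_zero]
  ring

lemma GG_abs_le {α₁ α₂ : ℝ → ℝ} (v : ℝ →ᵇ ℝ) {t : ℝ} (ht : 0 ≤ t) :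
    |GG α₁ α₂ v t| ≤ t + ‖v‖ / 4 * Real.exp (2 * t) := by
  have hb : IntervalIntegrable (fun s => 1 + ‖v‖ / 2 * Real.exp (2 * s)) volume 0 t :=
    (continuous_const.add (cont_exp2 _)).intervalIntegrable 0 t
  have hae : ∀ᵐ s ∂(volume.restrict (Ι (0:ℝ) t)),
      ‖gg α₁ α₂ v s‖ ≤ 1 + ‖v‖ / 2 * Real.exp (2 * s) := by
    filter_upwards [ae_restrict_mem measurableSet_uIoc] with s hs
    rw [Set.uIoc_of_le ht] at hs
    rw [Real.norm_eq_abs]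
    exact gg_sharp v hs.1.le
  have h := intervalIntegral.norm_integral_le_abs_of_norm_le hae hb
  rw [integral_exp_aux] at h
  rw [← Real.norm_eq_abs]
  refine h.trans ?_
  have he1 : (1:ℝ) ≤ Real.exp (2 * t) := Real.one_le_exp (by linarith)
  have hv := norm_nonneg v
  rw [abs_of_nonneg (by nlinarith)]
  nlinarith

lemma GG_sub_bound {α₁ α₂ : ℝ → ℝ} (hm₁ : Measurable α₁) (hm₂ : Measurable α₂)
    (v w : ℝ →ᵇ ℝ) {t : ℝ} (ht : 0 ≤ t) :
    |GG α₁ α₂ v t - GG α₁ α₂ w t| ≤ ‖v - w‖ / 4 * Real.exp (2 * t) := by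
  have hsub : GG α₁ α₂ v t - GG α₁ α₂ w t = ∫ s in (0:ℝ)..t, (gg α₁ α₂ v s - gg α₁ α₂ w s) :=
    (intervalIntegral.integral_sub (gg_intable hm₁ hm₂ v 0 t) (gg_intable hm₁ hm₂ w 0 t)).symm
  have hb : IntervalIntegrable (fun s => ‖v - w‖ / 2 * Real.exp (2 * s)) volume 0 t :=
    (cont_exp2 _).intervalIntegrable 0 t
  have hae : ∀ᵐ s ∂(volume.restrict (Ι (0:ℝ) t)),
      ‖gg α₁ α₂ v s - gg α₁ α₂ w s‖ ≤ ‖v - w‖ / 2 * Real.exp (2 * s) := by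
    filter_upwards [ae_restrict_mem measurableSet_uIoc] with s hs
    rw [Set.uIoc_of_le ht] at hs
    rw [Real.norm_eq_abs]
    exact gg_sub_bound v w hs.1.le
  have h := intervalIntegral.norm_integral_le_abs_of_norm_le hae hb
  rw [integral_exp_aux2] at h
  rw [hsub, ← Real.norm_eq_abs]
  refine h.trans ?_
  have he1 : (1:ℝ) ≤ Real.exp (2 * t) := Real.one_le_exp (by linarith)
  have hv := norm_nonneg (v - w)
  rw [abs_of_nonneg (by nlinarith)]
  nlinarith

def Fop (α₁ α₂ : ℝ → ℝ) (hm₁ : Measurable α₁) (hm₂ : Measurable α₂) (v : ℝ →ᵇ ℝ) : ℝ →ᵇ ℝ :=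
  BoundedContinuousFunction.ofNormedAddCommGroup
    (fun t => Real.exp (-(2 * max t 0)) * GG α₁ α₂ v (max t 0))
    ((Real.continuous_exp.comp ((continuous_const.mul
        (continuous_id.max continuous_const)).neg)).mul
      ((GG_cont hm₁ hm₂ v).comp (continuous_id.max continuous_const)))
    (1 + ‖v‖)
    (by
      intro t
      set m := max t 0 with hm
      have hm0 : (0:ℝ) ≤ m := le_max_right t 0
      have hE1 : (1:ℝ) ≤ Real.exp (2 * m) := Real.one_le_exp (by linarith)
      have hmE : m ≤ Real.exp (2 * m) := by
        nlinarith [Real.add_one_le_exp (2 * m)]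
      have hv := norm_nonneg v
      have hG : |GG α₁ α₂ v m| ≤ (1 + ‖v‖) * Real.exp (2 * m) := by
        refine (GG_abs_le v hm0).trans ?_
        nlinarith
      rw [Real.norm_eq_abs, abs_mul, abs_of_pos (Real.exp_pos _)]
      calc Real.exp (-(2 * m)) * |GG α₁ α₂ v m|
          ≤ Real.exp (-(2 * m)) * ((1 + ‖v‖) * Real.exp (2 * m)) :=
            mul_le_mul_of_nonneg_left hG (Real.exp_pos _).le
      _ = (1 + ‖v‖) * (Real.exp (-(2 * m)) * Real.exp (2 * m)) := by ring
      _ = 1 + ‖v‖ := by rw [← Real.exp_add]; simp)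

lemma Fop_apply (α₁ α₂ : ℝ → ℝ) (hm₁ : Measurable α₁) (hm₂ : Measurable α₂) (v : ℝ →ᵇ ℝ)
    (t : ℝ) : Fop α₁ α₂ hm₁ hm₂ v t = Real.exp (-(2 * max t 0)) * GG α₁ α₂ v (max t 0) := rfl

lemma Fop_dist_le {α₁ α₂ : ℝ → ℝ} (hm₁ : Measurable α₁) (hm₂ : Measurable α₂) (v w : ℝ →ᵇ ℝ) :
    dist (Fop α₁ α₂ hm₁ hm₂ v) (Fop α₁ α₂ hm₁ hm₂ w) ≤ 2⁻¹ * dist v w := by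
  refine (BoundedContinuousFunction.dist_le (by positivity)).2 fun t => ?_
  rw [Fop_apply, Fop_apply, Real.dist_eq]
  set m := max t 0 with hm
  have hm0 : (0:ℝ) ≤ m := le_max_right t 0
  have hG := GG_sub_bound hm₁ hm₂ v w hm0
  have hnd : ‖v - w‖ = dist v w := (dist_eq_norm v w).symm
  calc |Real.exp (-(2 * m)) * GG α₁ α₂ v m - Real.exp (-(2 * m)) * GG α₁ α₂ w m|
      = Real.exp (-(2 * m)) * |GG α₁ α₂ v m - GG α₁ α₂ w m| := by
        rw [← mul_sub, abs_mul, abs_of_pos (Real.exp_pos _)]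
  _ ≤ Real.exp (-(2 * m)) * (‖v - w‖ / 4 * Real.exp (2 * m)) :=
        mul_le_mul_of_nonneg_left hG (Real.exp_pos _).le
  _ = ‖v - w‖ / 4 * (Real.exp (-(2 * m)) * Real.exp (2 * m)) := by ring
  _ = ‖v - w‖ / 4 := by rw [← Real.exp_add]; simp
  _ ≤ 2⁻¹ * dist v w := by rw [hnd]; nlinarith [dist_nonneg (x := v) (y := w)]

lemma Fop_contracting {α₁ α₂ : ℝ → ℝ} (hm₁ : Measurable α₁) (hm₂ : Measurable α₂) :
    ContractingWith (1/2 : NNReal) (Fop α₁ α₂ hm₁ hm₂) := by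
  constructor
  · rw [← NNReal.coe_lt_coe]; norm_num
  · rw [lipschitzWith_iff_dist_le_mul]
    intro x y
    have := Fop_dist_le hm₁ hm₂ x y
    have hc : ((1/2 : NNReal) : ℝ) = 2⁻¹ := by norm_num
    rw [hc]
    exact this

lemma Fop_nonneg {α₁ α₂ : ℝ → ℝ} (hm₁ : Measurable α₁) (hm₂ : Measurable α₂) {v : ℝ →ᵇ ℝ}
    (hv : ∀ t, 0 ≤ v t) (t : ℝ) : 0 ≤ Fop α₁ α₂ hm₁ hm₂ v t :=
  mul_nonneg (Real.exp_pos _).le (GG_nonneg hv (le_max_right t 0))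

noncomputable def vstar (α₁ α₂ : ℝ → ℝ) (hm₁ : Measurable α₁) (hm₂ : Measurable α₂) : ℝ →ᵇ ℝ :=
  ContractingWith.fixedPoint (Fop α₁ α₂ hm₁ hm₂) (Fop_contracting hm₁ hm₂)

lemma vstar_fixed (α₁ α₂ : ℝ → ℝ) (hm₁ : Measurable α₁) (hm₂ : Measurable α₂) :
    Fop α₁ α₂ hm₁ hm₂ (vstar α₁ α₂ hm₁ hm₂) = vstar α₁ α₂ hm₁ hm₂ :=
  ContractingWith.fixedPoint_isFixedPt _

lemma vstar_nonneg (α₁ α₂ : ℝ → ℝ) (hm₁ : Measurable α₁) (hm₂ : Measurable α₂) (t : ℝ) :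
    0 ≤ vstar α₁ α₂ hm₁ hm₂ t := by
  have hiter : ∀ n : ℕ, ∀ t, 0 ≤ ((Fop α₁ α₂ hm₁ hm₂)^[n] 0) t := by
    intro n
    induction n with
    | zero => intro t; simp
    | succ n ih =>
      intro t
      rw [Function.iterate_succ_apply']
      exact Fop_nonneg hm₁ hm₂ ih t
  have htd := (Fop_contracting hm₁ hm₂).tendsto_iterate_fixedPoint 0
  have htd2 : Filter.Tendsto (fun n => ((Fop α₁ α₂ hm₁ hm₂)^[n] 0) t) Filter.atTop
      (nhds (vstar α₁ α₂ hm₁ hm₂ t)) :=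
    ((continuous_eval_const t).tendsto _).comp htd
  exact ge_of_tendsto htd2 (Filter.Eventually.of_forall fun n => hiter n t)

lemma ustar_eq (α₁ α₂ : ℝ → ℝ) (hm₁ : Measurable α₁) (hm₂ : Measurable α₂) (t : ℝ) :
    uu (vstar α₁ α₂ hm₁ hm₂) t = GG α₁ α₂ (vstar α₁ α₂ hm₁ hm₂) (max t 0) := by
  have h : Fop α₁ α₂ hm₁ hm₂ (vstar α₁ α₂ hm₁ hm₂) t = vstar α₁ α₂ hm₁ hm₂ t := by
    rw [vstar_fixed]
  rw [Fop_apply] at h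
  rw [uu, ← h, wt2]
  calc Real.exp (2 * max t 0) * (Real.exp (-(2 * max t 0)) * GG α₁ α₂ (vstar α₁ α₂ hm₁ hm₂) (max t 0))
      = (Real.exp (2 * max t 0) * Real.exp (-(2 * max t 0))) * GG α₁ α₂ (vstar α₁ α₂ hm₁ hm₂) (max t 0) := by
        ring
  _ = GG α₁ α₂ (vstar α₁ α₂ hm₁ hm₂) (max t 0) := by rw [← Real.exp_add]; simp

noncomputable def phi (α₁ α₂ : ℝ → ℝ) (hm₁ : Measurable α₁) (hm₂ : Measurable α₂) : ℝ → ℝ :=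
  fun t => 1 + UU (vstar α₁ α₂ hm₁ hm₂) (max t 0)

lemma phi_ge_one (α₁ α₂ : ℝ → ℝ) (hm₁ : Measurable α₁) (hm₂ : Measurable α₂) (t : ℝ) :
    (1:ℝ) ≤ phi α₁ α₂ hm₁ hm₂ t := by
  have h1 : 0 ≤ UU (vstar α₁ α₂ hm₁ hm₂) (max t 0) := by
    have := UU_nonneg (v := vstar α₁ α₂ hm₁ hm₂) (vstar_nonneg α₁ α₂ hm₁ hm₂) (le_max_right t 0)
    rwa [UU_zero, sub_zero] at this
  rw [phi]
  linarith

lemma phi_solution (α₁ α₂ : ℝ → ℝ) (hm₁ : Measurable α₁) (hm₂ : Measurable α₂)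
    (hle₁ : ∀ t, 0 ≤ t → α₁ t ≤ t) (hle₂ : ∀ t, 0 ≤ t → α₂ t ≤ t) :
    IsSolutionFrom 0 (fun _ => 1) (fun _ => 0)
      (fun t => Real.cos (Real.sin (Real.log (1 + t)))) 3
      ![fun t => Real.sin t ^ 2, fun t => Real.cos t ^ 2, fun _ => (-1 : ℝ)]
      ![α₁, α₂, fun t => t] 0 (phi α₁ α₂ hm₁ hm₂) := by
  set v := vstar α₁ α₂ hm₁ hm₂ with hv
  refine ⟨le_rfl, ?_, uu v, ?_, ?_, ?_⟩
  · exact continuous_const.add ((UU_cont v).comp (continuous_id.max continuous_const))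
  · exact (uu_cont v).continuousOn
  · intro t ht
    have hd : HasDerivAt (UU v) (uu v t) t :=
      intervalIntegral.integral_hasDerivAt_right (uu_intable v 0 t)
        ((uu_cont v).aestronglyMeasurable.stronglyMeasurableAtFilter)
        (uu_cont v).continuousAt
    have hd' : HasDerivWithinAt (fun x => 1 + UU v x) (uu v t) (Ici 0) t :=
      (hd.const_add 1).hasDerivWithinAt
    refine hd'.congr (fun y hy => ?_) ?_
    · rw [phi, max_eq_left (mem_Ici.1 hy)]
    · rw [phi, max_eq_left (mem_Ici.1 ht)]
  · intro t ht
    have ht0 : (0:ℝ) ≤ t := ht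
    have heq : ∀ s, 0 ≤ s →
        Real.cos (Real.sin (Real.log (1 + s))) - (0:ℝ) * uu v s -
          ∑ j : Fin 3,
            (![fun t => Real.sin t ^ 2, fun t => Real.cos t ^ 2, fun _ => (-1 : ℝ)]) j s *
              phi α₁ α₂ hm₁ hm₂ ((![α₁, α₂, fun t : ℝ => t]) j s)
          = gg α₁ α₂ v s := by
      intro s hs
      simp only [Fin.sum_univ_three, Matrix.cons_val_zero, Matrix.cons_val_one, Matrix.head_cons,
        Matrix.cons_val_two, Matrix.tail_cons, phi]
      rw [gg, ff, aj_eq hle₁ hs, aj_eq hle₂ hs, max_eq_left hs]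
      linear_combination (-(1 + UU v s)) * Real.sin_sq_add_cos_sq s
    constructor
    · refine (gg_intable hm₁ hm₂ v 0 t).congr_ae ?_
      filter_upwards [ae_restrict_mem measurableSet_uIoc] with s hs
      rw [Set.uIoc_of_le ht0] at hs
      have h := (heq s hs.1.le).symm
      simpa using h
    · have hu0 : uu v 0 = 0 := by
        rw [ustar_eq α₁ α₂ hm₁ hm₂ 0, max_self]
        exact intervalIntegral.integral_same
      have hIeq : (∫ s in (0:ℝ)..t,
          ((fun t => Real.cos (Real.sin (Real.log (1 + t)))) s - (fun _ => (0:ℝ)) s * uu v s -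
            ∑ j : Fin 3,
              (![fun t => Real.sin t ^ 2, fun t => Real.cos t ^ 2, fun _ => (-1 : ℝ)]) j s *
                phi α₁ α₂ hm₁ hm₂ ((![α₁, α₂, fun t : ℝ => t]) j s)))
          = GG α₁ α₂ v t := by
        rw [GG]
        apply intervalIntegral.integral_congr
        intro s hs
        rw [Set.uIcc_of_le ht0] at hs
        simpa using heq s hs.1
      simp only [one_mul]
      rw [hu0, hIeq, ustar_eq α₁ α₂ hm₁ hm₂ t, max_eq_left ht0, zero_add]

end StmtAux

end StmtAux

/-- Example 3.1: the equation
`φ'' + sin² t · φ(α₁ t) + cos² t · φ(α₂ t) - φ(t) = cos (sin (ln (1 + t)))`, `t ≥ 0`,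
is nonoscillatory. -/
theorem stmt10 (α₁ α₂ : ℝ → ℝ)
    (hm₁ : Measurable α₁) (hm₂ : Measurable α₂)
    (hle₁ : ∀ t, 0 ≤ t → α₁ t ≤ t) (hle₂ : ∀ t, 0 ≤ t → α₂ t ≤ t)
    (htend₁ : Filter.Tendsto α₁ Filter.atTop Filter.atTop)
    (htend₂ : Filter.Tendsto α₂ Filter.atTop Filter.atTop) :
    ¬ EquationOscillatory 0 (fun _ => 1) (fun _ => 0)
      (fun t => Real.cos (Real.sin (Real.log (1 + t)))) 3
      ![fun t => Real.sin t ^ 2, fun t => Real.cos t ^ 2, fun _ => (-1 : ℝ)]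
      ![α₁, α₂, fun t => t] := by
  intro H
  obtain ⟨t, -, hzero⟩ := H (StmtAux.phi α₁ α₂ hm₁ hm₂)
    ⟨0, StmtAux.phi_solution α₁ α₂ hm₁ hm₂ hle₁ hle₂⟩ 0
  have h1 := StmtAux.phi_ge_one α₁ α₂ hm₁ hm₂ t
  rw [hzero] at h1
  linarith
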